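/- arXiv:1011.4836 — 10 statements merged into one kernel-verified Lean document; each statement's English description precedes it below -/
import Mathlib

section
/- Let N = K·2^n + 1 where K is odd and K < 2^n. If there exists an integer a such that a^((N-1)/2) ≡ -1 (mod N), then N is prime. -/
theorem proth (K n : ℕ) (N : ℕ) (hn : 1 ≤ n) (hK : Odd K) (hKlt : K < 2 ^ n)
    (hN : N = K * 2 ^ n + 1) (a : ℤ)
    (ha : (a : ZMod N) ^ ((N - 1) / 2) = -1) : Nat.Prime N := by
  have hK1 : 1 ≤ K := hK.pos
  have hx1 : 2 ≤ 2 ^ n := Nat.one_lt_two_pow (by omega)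
  have h2n : (2:ℕ) ^ n = 2 ^ (n-1) * 2 := by
    rw [← pow_succ]; congr 1; omega
  have hhalf : (N - 1) / 2 = K * 2 ^ (n-1) := by
    have : N - 1 = K * 2 ^ (n-1) * 2 := by rw [mul_assoc, ← h2n]; omega
    rw [this, Nat.mul_div_cancel _ (by norm_num)]
  rw [hhalf] at ha
  by_contra hNp
  set p := N.minFac with hp
  have hN3 : 3 ≤ N := by nlinarith
  have hpp : p.Prime := Nat.minFac_prime (by omega)
  haveI : Fact p.Prime := ⟨hpp⟩
  have hpdvd : p ∣ N := Nat.minFac_dvd N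
  have hpodd : p ≠ 2 := by
    intro h
    have h2N : (2:ℕ) ∣ N := h ▸ hpdvd
    have h2e : (2:ℕ) ∣ 2 ^ n := dvd_pow_self 2 (by omega)
    obtain ⟨c, hc⟩ := h2e
    have hNc : N = 2 * (K * c) + 1 := by rw [hN, hc]; ring
    omega
  have hp3 : 2 < p := lt_of_le_of_ne hpp.two_le (Ne.symm hpodd)
  haveI : Fact (2 < p) := ⟨hp3⟩
  set b : ZMod p := (a : ZMod p) with hb
  have hcast : b ^ (K * 2 ^ (n-1)) = -1 := by
    have := congrArg (ZMod.castHom hpdvd (ZMod p)) ha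
    simpa only [map_pow, map_intCast, map_neg, map_one] using this
  have hne : (-1 : ZMod p) ≠ 1 := ZMod.neg_one_ne_one
  have hb0 : b ≠ 0 := by
    intro h
    rw [h, zero_pow (by positivity)] at hcast
    exact (neg_ne_zero.mpr one_ne_zero) hcast.symm
  have hb1 : b ^ (K * 2 ^ n) = 1 := by
    have h2 : (b ^ (K * 2 ^ (n-1))) ^ 2 = 1 := by rw [hcast]; ring
    rw [← pow_mul, mul_assoc, ← h2n] at h2
    exact h2
  set d := orderOf b with hd
  have hd1 : d ∣ K * 2 ^ n := orderOf_dvd_of_pow_eq_one hb1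
  have hd2 : ¬ d ∣ K * 2 ^ (n-1) := by
    intro h
    have h1 := orderOf_dvd_iff_pow_eq_one.mp h
    rw [hcast] at h1
    exact hne h1
  have h2nd : 2 ^ n ∣ d := by
    obtain ⟨d1, d2, hd1K, hd22, hdeq⟩ := exists_dvd_and_dvd_of_dvd_mul hd1
    obtain ⟨m, hm, rfl⟩ := (Nat.dvd_prime_pow Nat.prime_two).mp hd22
    rcases lt_or_eq_of_le hm with hlt | rfl
    · exact absurd (hdeq ▸ mul_dvd_mul hd1K (pow_dvd_pow 2 (by omega)))
        hd2
    · exact hdeq ▸ Dvd.intro_left d1 rfl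
  have hdp : d ∣ p - 1 := orderOf_dvd_of_pow_eq_one (ZMod.pow_card_sub_one_eq_one hb0)
  have h2np : 2 ^ n ∣ p - 1 := h2nd.trans hdp
  have hpge : 2 ^ n + 1 ≤ p := by
    have := Nat.le_of_dvd (by omega) h2np
    omega
  have hsq := Nat.minFac_sq_le_self (by omega : 0 < N) hNp
  rw [pow_two] at hsq
  nlinarith
end

section
/- Let N = K·p^n + 1 where p is prime and K < p^n. If there exists an integer a with a^(N-1) ≡ 1 (mod N) and gcd(a^((N-1)/p) - 1, N) = 1, then N is prime. -/
private lemma pow_dvd_of_dvd_mul_pow {p n K d : ℕ} (hp : p.Prime) (hd : d ≠ 0)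
    (h1 : d ∣ K * p ^ n) (h2 : ¬ d ∣ K * p ^ (n - 1)) : p ^ n ∣ d := by
  by_contra hcon
  apply h2
  set m := d.factorization p with hm
  have hmlt : m < n := by
    by_contra hle
    exact hcon (dvd_trans (pow_dvd_pow p (le_of_not_gt hle))
      (Nat.ordProj_dvd d p))
  have hdecomp : p ^ m * (d / p ^ m) = d := Nat.ordProj_mul_ordCompl_eq_self d p
  have hcop : Nat.Coprime p (d / p ^ m) := Nat.coprime_ordCompl hp hd
  have hu : (d / p ^ m) ∣ K := by
    have h3 : (d / p ^ m) ∣ K * p ^ n := dvd_trans (Dvd.intro_left _ hdecomp) h1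
    exact (Nat.Coprime.pow_right n hcop.symm).dvd_of_dvd_mul_right h3
  calc d = p ^ m * (d / p ^ m) := hdecomp.symm
    _ ∣ p ^ (n - 1) * K := mul_dvd_mul (pow_dvd_pow p (by omega)) hu
    _ = K * p ^ (n - 1) := mul_comm _ _

theorem pocklington (p K n N : ℕ) (hp : p.Prime) (hK : 0 < K) (hn : 0 < n)
    (hKlt : K < p ^ n) (hN : N = K * p ^ n + 1) (a : ℤ)
    (h1 : (a : ZMod N) ^ (N - 1) = 1)
    (h2 : Int.gcd (a ^ ((N - 1) / p) - 1) N = 1) : Nat.Prime N := by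
  have hppos : 0 < p := hp.pos
  have hpn : 0 < p ^ n := Nat.pow_pos hppos
  have hN1 : N - 1 = K * p ^ n := by omega
  have hN2 : 2 ≤ N := by nlinarith
  have hNq : (N - 1) / p = K * p ^ (n - 1) := by
    have : N - 1 = (K * p ^ (n - 1)) * p := by
      rw [hN1]
      have : p ^ n = p ^ (n - 1) * p := by
        conv_lhs => rw [show n = (n - 1) + 1 by omega]
        rw [pow_succ]
      rw [this]; ring
    rw [this, Nat.mul_div_cancel _ hppos]
  by_contra hNP
  -- least prime factor q of N
  set q := N.minFac with hq
  have hqprime : q.Prime := Nat.minFac_prime (by omega)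
  have hqdvd : q ∣ N := Nat.minFac_dvd N
  have hqsq : q * q ≤ N := by
    have := Nat.minFac_sq_le_self (by omega : 0 < N) hNP
    rwa [sq] at this
  haveI : Fact q.Prime := ⟨hqprime⟩
  -- N ∣ a^(N-1) - 1 in ℤ
  have hdvdN : (N : ℤ) ∣ a ^ (N - 1) - 1 := by
    have : ((a ^ (N - 1) - 1 : ℤ) : ZMod N) = 0 := by push_cast [h1]; ring
    exact (ZMod.intCast_zmod_eq_zero_iff_dvd _ _).mp this
  have hqdvdZ : (q : ℤ) ∣ a ^ (N - 1) - 1 := dvd_trans (Int.natCast_dvd_natCast.mpr hqdvd) hdvdN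
  -- b = a in ZMod q
  set b : ZMod q := (a : ZMod q) with hb
  have hbpow : b ^ (N - 1) = 1 := by
    have : ((a ^ (N - 1) - 1 : ℤ) : ZMod q) = 0 :=
      (ZMod.intCast_zmod_eq_zero_iff_dvd _ _).mpr hqdvdZ
    push_cast at this
    linear_combination this
  have hbne : b ≠ 0 := by
    intro h0
    rw [h0, zero_pow (by omega : N - 1 ≠ 0)] at hbpow
    exact zero_ne_one hbpow
  have horddvd : orderOf b ∣ N - 1 := orderOf_dvd_of_pow_eq_one hbpow
  have hordpos : orderOf b ≠ 0 := by
    have : IsOfFinOrder b := isOfFinOrder_iff_pow_eq_one.mpr ⟨N - 1, by omega, hbpow⟩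
    exact (orderOf_pos_iff.mpr this).ne'
  have hordndvd : ¬ orderOf b ∣ (N - 1) / p := by
    intro hdvd
    have hb1 : b ^ ((N - 1) / p) = 1 := orderOf_dvd_iff_pow_eq_one.mp hdvd
    have : (q : ℤ) ∣ a ^ ((N - 1) / p) - 1 := by
      rw [← ZMod.intCast_zmod_eq_zero_iff_dvd]
      push_cast
      linear_combination hb1
    have hq1 : (q : ℤ) ∣ (Int.gcd (a ^ ((N - 1) / p) - 1) N : ℤ) :=
      Int.dvd_coe_gcd this (Int.natCast_dvd_natCast.mpr hqdvd)
    rw [h2] at hq1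
    have := Int.le_of_dvd one_pos hq1
    have := hqprime.two_le
    omega
  -- p^n ∣ orderOf b
  have hpnord : p ^ n ∣ orderOf b := by
    apply pow_dvd_of_dvd_mul_pow hp hordpos
    · rwa [← hN1]
    · rwa [← hNq]
  -- orderOf b ∣ q - 1
  have hordq : orderOf b ∣ q - 1 := by
    apply orderOf_dvd_of_pow_eq_one
    exact ZMod.pow_card_sub_one_eq_one hbne
  have hpnq : p ^ n ∣ q - 1 := dvd_trans hpnord hordq
  have hq1pos : 0 < q - 1 := by have := hqprime.two_le; omega
  have hqge : p ^ n + 1 ≤ q := by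
    have := Nat.le_of_dvd hq1pos hpnq
    omega
  -- final contradiction
  nlinarith [hqsq, hqge, hKlt, hN1, hpn]
end

section
/- Let N = K·p^n + 1 where p is prime, K < p^n and gcd(K,p) = 1, and suppose a is an integer that is not a p-th power residue modulo N (i.e., there is no x with x^p ≡ a (mod N)). Then N is prime if and only if Φ_p(a^((N-1)/p)) ≡ 0 (mod N), where Φ_p(X) = 1 + X + X^2 + ... + X^(p-1) is the p-th cyclotomic polynomial. -/
open Finset

theorem generalized_proth (p K n N : ℕ) (hp : p.Prime) (hK : 0 < K) (hn : 0 < n)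
    (hKp : Nat.gcd K p = 1) (hKlt : K < p ^ n) (hN : N = K * p ^ n + 1) (a : ℤ)
    (ha : ¬ ∃ x : ℤ, (x : ZMod N) ^ p = (a : ZMod N)) :
    Nat.Prime N ↔ ∑ i ∈ Finset.range p, ((a : ZMod N) ^ ((N - 1) / p)) ^ i = 0 := by
  have hp1 : 1 < p := hp.one_lt
  have hpn_pos : 0 < p ^ n := Nat.pow_pos (n := n) hp.pos
  have hpn2 : 2 ≤ p ^ n := by
    calc 2 ≤ p := hp.two_le
    _ = p ^ 1 := (pow_one p).symm
    _ ≤ p ^ n := Nat.pow_le_pow_right hp.pos hn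
  have hN1 : N - 1 = K * p ^ n := by omega
  have hNgt : 1 < N := by nlinarith
  have hpow : p ^ n = p ^ (n - 1) * p := by
    rw [← pow_succ]; congr 1; omega
  have hdiv : (N - 1) / p = K * p ^ (n - 1) := by
    rw [hN1, hpow, ← mul_assoc, Nat.mul_div_cancel _ hp.pos]
  have hdvd : p ∣ N - 1 := by
    rw [hN1, hpow]; exact ⟨K * p ^ (n - 1), by ring⟩
  have hdm : (N - 1) / p * p = N - 1 := Nat.div_mul_cancel hdvd
  haveI : NeZero N := ⟨by omega⟩
  set α : ZMod N := (a : ZMod N) with hαdef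
  set b : ZMod N := α ^ ((N - 1) / p) with hbdef
  constructor
  · -- forward: N prime → Φ_p(b) = 0
    intro hNp
    haveI : Fact N.Prime := ⟨hNp⟩
    have hα0 : α ≠ 0 := by
      intro h
      exact ha ⟨0, by rw [Int.cast_zero, zero_pow hp.ne_zero]; exact h.symm⟩
    have hbp : b ^ p = 1 := by
      rw [hbdef, ← pow_mul, hdm]
      exact ZMod.pow_card_sub_one_eq_one hα0
    have hb1 : b ≠ 1 := by
      intro hb
      -- a is a p-th power, contradiction
      obtain ⟨u, hu⟩ := (isUnit_iff_ne_zero.mpr hα0)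
      obtain ⟨g, hg⟩ := IsCyclic.exists_generator (α := (ZMod N)ˣ)
      have hog : orderOf g = N - 1 := by
        rw [orderOf_eq_card_of_forall_mem_zpowers hg, Nat.card_eq_fintype_card,
          ZMod.card_units]
      obtain ⟨k, hk⟩ := ((isOfFinOrder_of_finite g).mem_powers_iff_mem_zpowers).mpr (hg u)
      have hk' : g ^ k = u := hk
      have hu1 : u ^ ((N - 1) / p) = 1 := by
        apply Units.ext
        push_cast
        rw [hu]
        exact hb
      have hdvd2 : (N - 1) ∣ k * ((N - 1) / p) := by
        have h1 : g ^ (k * ((N - 1) / p)) = 1 := by rw [pow_mul, hk', hu1]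
        have h2 := orderOf_dvd_of_pow_eq_one h1
        rwa [hog] at h2
      have hmpos : 0 < (N - 1) / p := by rw [hdiv]; positivity
      have hpk : p ∣ k := by
        have h2 : p * ((N - 1) / p) ∣ k * ((N - 1) / p) := by
          rwa [mul_comm p, hdm]
        exact (Nat.mul_dvd_mul_iff_right hmpos).mp h2
      refine ha ⟨((((g ^ (k / p) : (ZMod N)ˣ) : ZMod N)).val : ℤ), ?_⟩
      have hcast : (((((g ^ (k / p) : (ZMod N)ˣ) : ZMod N)).val : ℤ) : ZMod N)
          = ((g ^ (k / p) : (ZMod N)ˣ) : ZMod N) := by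
        rw [Int.cast_natCast, ZMod.natCast_val, ZMod.cast_id]
      rw [hcast, ← Units.val_pow_eq_pow_val, ← pow_mul, Nat.div_mul_cancel hpk, hk', hu]
    have h0 : (∑ i ∈ Finset.range p, b ^ i) * (b - 1) = 0 := by
      rw [geom_sum_mul, hbp, sub_self]
    rcases mul_eq_zero.mp h0 with h | h
    · exact h
    · exact absurd (sub_eq_zero.mp h) hb1
  · -- backward: Φ_p(b) = 0 → N prime
    intro hsum
    have hbp : b ^ p = 1 := by
      have h1 : b ^ p - 1 = 0 := by rw [← geom_sum_mul, hsum, zero_mul]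
      have := sub_eq_zero.mp h1
      exact this
    -- key: every prime divisor q of N satisfies p^n ∣ q - 1
    have key : ∀ q : ℕ, q.Prime → q ∣ N → p ^ n ∣ q - 1 := by
      intro q hq hqN
      haveI : Fact q.Prime := ⟨hq⟩
      have hqp : q ≠ p := by
        rintro rfl
        have h1 : q ∣ N - 1 := by
          rw [hN1]; exact Dvd.dvd.mul_left (dvd_pow_self q (by omega)) K
        have h2 : q ∣ 1 := by
          have := Nat.dvd_sub hqN h1
          rwa [show N - (N - 1) = 1 by omega] at this
        exact absurd (Nat.le_of_dvd one_pos h2) (by omega)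
      set f := ZMod.castHom hqN (ZMod q) with hf
      set β : ZMod q := (a : ZMod q) with hβdef
      have hfα : f α = β := by rw [hαdef, hβdef, map_intCast]
      set c : ZMod q := β ^ ((N - 1) / p) with hcdef
      have hfb : f b = c := by rw [hbdef, map_pow, hfα]
      have hcp : c ^ p = 1 := by rw [← hfb, ← map_pow, hbp, map_one]
      have hcsum : ∑ i ∈ Finset.range p, c ^ i = 0 := by
        have h := congrArg f hsum
        rw [map_sum, map_zero] at h
        simpa [map_pow, hfb] using h
      have hc1 : c ≠ 1 := by
        intro h
        rw [h] at hcsum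
        simp only [one_pow, Finset.sum_const, Finset.card_range, nsmul_eq_mul,
          mul_one] at hcsum
        have : q ∣ p := (ZMod.natCast_eq_zero_iff p q).mp hcsum
        exact hqp ((Nat.prime_dvd_prime_iff_eq hq hp).mp this)
      have hβ0 : β ≠ 0 := by
        intro h
        have hc0 : c = 0 := by
          rw [hcdef, h, zero_pow]
          rw [hdiv]; positivity
        rw [hc0, zero_pow hp.ne_zero] at hcp
        exact zero_ne_one hcp
      have hβq : β ^ (q - 1) = 1 := ZMod.pow_card_sub_one_eq_one hβ0
      set d := orderOf β with hd
      have hdq : d ∣ q - 1 := orderOf_dvd_of_pow_eq_one hβq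
      have hq1pos : 0 < q - 1 := by have := hq.two_le; omega
      have hd0 : d ≠ 0 := by
        intro h
        rw [h] at hdq
        exact absurd (Nat.eq_zero_of_zero_dvd hdq) (by omega)
      have hβN : β ^ (N - 1) = 1 := by
        rw [← hdm, pow_mul]
        exact hcp
      have hdN : d ∣ N - 1 := orderOf_dvd_of_pow_eq_one hβN
      -- show p ^ n ∣ d
      have hpnd : p ^ n ∣ d := by
        by_contra hnd
        obtain ⟨v, m, hm, hdeq⟩ := Nat.exists_eq_pow_mul_and_not_dvd hd0 p hp.ne_one
        have hvn : v < n := by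
          by_contra hv
          exact hnd (hdeq ▸ dvd_mul_of_dvd_left (pow_dvd_pow p (by omega)) m)
        have hmK : m ∣ K := by
          have hmd : m ∣ N - 1 := (hdeq ▸ dvd_mul_left m _).trans hdN
          rw [hN1] at hmd
          have hcop : Nat.Coprime m (p ^ n) :=
            (((Nat.Prime.coprime_iff_not_dvd hp).mpr hm).symm).pow_right n
          exact hcop.dvd_of_dvd_mul_right hmd
        have hdK : d ∣ K * p ^ (n - 1) := by
          rw [hdeq, mul_comm]
          exact mul_dvd_mul hmK (pow_dvd_pow p (by omega))
        have : c = 1 := by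
          rw [hcdef, hdiv]
          exact orderOf_dvd_iff_pow_eq_one.mp hdK
        exact hc1 this
      exact hpnd.trans hdq
    -- conclude primality
    by_contra hNnp
    set q := N.minFac with hq
    have hqprime : q.Prime := Nat.minFac_prime (by omega)
    have hqdvd : q ∣ N := Nat.minFac_dvd N
    have hkey := key q hqprime hqdvd
    have hqge : p ^ n + 1 ≤ q := by
      have := Nat.le_of_dvd (by have := hqprime.two_le; omega) hkey
      omega
    have hsq : q ^ 2 ≤ N := Nat.minFac_sq_le_self (by omega) hNnp
    nlinarith [hqge, hsq, hKlt, hpn_pos]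
end

section
/- Let N = K·p^n + 1 where p is prime, gcd(K,p) = 1 and K < p^n. If Φ_p(a^((N-1)/p)) ≡ 0 (mod N) for some integer a, then N is prime and a is a p-th power non-residue modulo N. -/
lemma aux_pow_dvd (K p n d : ℕ) (hp : p.Prime) (hn : 0 < n) (hd : d ∣ K * p ^ n)
    (hnd : ¬ d ∣ K * p ^ (n - 1)) : p ^ n ∣ d := by
  have h1 : d ∣ K * Nat.gcd d (p ^ n) := by
    have := Nat.dvd_gcd (dvd_mul_left d K) hd
    rwa [Nat.gcd_mul_left] at this
  obtain ⟨e, he, hg⟩ := (Nat.dvd_prime_pow hp).mp (Nat.gcd_dvd_right d (p ^ n))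
  rcases eq_or_lt_of_le he with rfl | hlt
  · rw [← hg]; exact Nat.gcd_dvd_left _ _
  · exfalso
    apply hnd
    refine h1.trans (Nat.mul_dvd_mul_left K ?_)
    rw [hg]
    exact pow_dvd_pow p (by omega)

theorem generalized_proth' (p K n N : ℕ) (hp : p.Prime) (hK : 0 < K) (hn : 0 < n)
    (hKp : Nat.gcd K p = 1) (hKlt : K < p ^ n) (hN : N = K * p ^ n + 1) (a : ℤ)
    (ha : ∑ i ∈ Finset.range p, ((a : ZMod N) ^ ((N - 1) / p)) ^ i = 0) :
    Nat.Prime N ∧ ¬ ∃ x : ℤ, (x : ZMod N) ^ p = (a : ZMod N) := by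
  have hp2 : 2 ≤ p := hp.two_le
  have hpn1 : 1 ≤ p ^ n := Nat.one_le_pow _ _ hp.pos
  have hpn1' : 1 ≤ p ^ (n - 1) := Nat.one_le_pow _ _ hp.pos
  have hppow : p ^ (n - 1) * p = p ^ n := by
    rw [← pow_succ]; congr 1; omega
  have hN1 : N - 1 = K * p ^ n := by omega
  have hpleN : p ≤ K * p ^ n := by
    calc p ≤ p ^ n := Nat.le_self_pow (by omega) p
    _ ≤ K * p ^ n := Nat.le_mul_of_pos_left _ hK
  have hE : (N - 1) / p = K * p ^ (n - 1) := by
    rw [hN1, ← hppow, ← mul_assoc, Nat.mul_div_cancel _ hp.pos]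
  have hNe : NeZero N := ⟨by omega⟩
  have hExp : K * p ^ (n - 1) * p = K * p ^ n := by rw [mul_assoc, hppow]
  -- p does not divide N
  have hpndN : ¬ p ∣ N := by
    intro h
    have h2 : p ∣ K * p ^ n := Dvd.dvd.mul_left (dvd_pow_self p (by omega)) K
    have h3 := Nat.dvd_sub h h2
    have h4 : N - K * p ^ n = 1 := by simp [hN]
    rw [h4] at h3
    have := Nat.le_of_dvd one_pos h3
    omega
  -- key claim: every prime divisor of N is at least p^n + 1
  have key : ∀ q : ℕ, q.Prime → q ∣ N → p ^ n + 1 ≤ q := by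
    intro q hq hqN
    haveI : Fact q.Prime := ⟨hq⟩
    have hc_sum : ∑ i ∈ Finset.range p, ((a : ZMod q) ^ (K * p ^ (n - 1))) ^ i = 0 := by
      have := congrArg (ZMod.castHom hqN (ZMod q)) ha
      rw [hE] at this
      simpa [map_sum, map_pow] using this
    set c : ZMod q := (a : ZMod q) ^ (K * p ^ (n - 1)) with hc
    have hcp : c ^ p = 1 := by
      have h := geom_sum_mul c p
      rw [hc_sum, zero_mul] at h
      exact sub_eq_zero.mp h.symm
    have hc1 : c ≠ 1 := by
      intro h
      rw [h] at hc_sum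
      simp only [one_pow, Finset.sum_const, Finset.card_range, nsmul_eq_mul, mul_one] at hc_sum
      have hqp : q ∣ p := (ZMod.natCast_eq_zero_iff p q).mp hc_sum
      have := (Nat.prime_dvd_prime_iff_eq hq hp).mp hqp
      exact hpndN (this ▸ hqN)
    have ha0 : (a : ZMod q) ≠ 0 := by
      intro h
      have : c = 0 := by
        rw [hc, h, zero_pow]
        positivity
      rw [this, zero_pow hp.pos.ne'] at hcp
      exact zero_ne_one hcp
    have hd1 : orderOf (a : ZMod q) ∣ K * p ^ n := by
      apply orderOf_dvd_of_pow_eq_one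
      rw [← hExp, pow_mul]
      exact hcp
    have hd2 : ¬ orderOf (a : ZMod q) ∣ K * p ^ (n - 1) := by
      intro h
      exact hc1 (orderOf_dvd_iff_pow_eq_one.mp h)
    have hpnd := aux_pow_dvd K p n _ hp hn hd1 hd2
    have hdq : orderOf (a : ZMod q) ∣ q - 1 :=
      orderOf_dvd_of_pow_eq_one (ZMod.pow_card_sub_one_eq_one ha0)
    have h5 : p ^ n ∣ q - 1 := hpnd.trans hdq
    have h6 : p ^ n ≤ q - 1 := Nat.le_of_dvd (by have := hq.two_le; omega) h5
    omega
  -- N is prime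
  have hsq : Nat.sqrt N ≤ p ^ n := by
    have h : N < (p ^ n + 1) ^ 2 := by nlinarith
    have := Nat.sqrt_lt'.mpr h
    omega
  have hNprime : N.Prime := by
    rw [Nat.prime_def_le_sqrt]
    constructor
    · omega
    · intro m hm2 hmsq hmN
      have hqm : m.minFac.Prime := Nat.minFac_prime (by omega)
      have := key m.minFac hqm ((Nat.minFac_dvd m).trans hmN)
      have := Nat.minFac_le (by omega : 0 < m)
      omega
  refine ⟨hNprime, ?_⟩
  rintro ⟨x, hx⟩
  haveI : Fact N.Prime := ⟨hNprime⟩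
  have hb_sum := ha
  rw [hE] at hb_sum
  set b : ZMod N := (a : ZMod N) ^ (K * p ^ (n - 1)) with hb
  have hbp : b ^ p = 1 := by
    have h := geom_sum_mul b p
    rw [hb_sum, zero_mul] at h
    exact sub_eq_zero.mp h.symm
  have hb1 : b ≠ 1 := by
    intro h
    rw [h] at hb_sum
    simp only [one_pow, Finset.sum_const, Finset.card_range, nsmul_eq_mul, mul_one] at hb_sum
    have := (ZMod.natCast_eq_zero_iff p N).mp hb_sum
    have := Nat.le_of_dvd (by omega) this
    omega
  have hx0 : (x : ZMod N) ≠ 0 := by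
    intro h
    have : b = 0 := by
      rw [hb, ← hx, h, zero_pow hp.pos.ne', zero_pow]
      positivity
    rw [this, zero_pow hp.pos.ne'] at hbp
    exact zero_ne_one hbp
  apply hb1
  rw [hb, ← hx, ← pow_mul, mul_comm p, hExp, ← hN1]
  exact ZMod.pow_card_sub_one_eq_one hx0
end

section
/- Let N = K·p^n + 1 be prime, where p is prime, K is even and gcd(K,p) = 1. Then for every integer a > 1 with gcd(a,N) = 1, either a^K ≡ 1 (mod N), or there exists j with 0 ≤ j ≤ n-1 such that Φ_p(a^(K·p^j)) ≡ 0 (mod N). -/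
theorem p_miller_rabin (p K n N : ℕ) (hp : p.Prime) (hK : 0 < K) (hKe : Even K)
    (hKp : Nat.gcd K p = 1) (hn : 0 < n) (hN : N = K * p ^ n + 1) (hNp : Nat.Prime N)
    (a : ℤ) (ha1 : 1 < a) (ha : IsCoprime a (N : ℤ)) :
    (a : ZMod N) ^ K = 1 ∨
      ∃ j, j ≤ n - 1 ∧ ∑ i ∈ Finset.range p, ((a : ZMod N) ^ (K * p ^ j)) ^ i = 0 := by
  haveI : Fact N.Prime := ⟨hNp⟩
  have haz : (a : ZMod N) ≠ 0 := by
    intro h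
    rw [ZMod.intCast_zmod_eq_zero_iff_dvd] at h
    have := IsCoprime.isUnit_of_dvd' ha h dvd_rfl
    rw [Int.isUnit_iff] at this
    have h2 : N ≥ 2 := hNp.two_le
    rcases this with h1 | h1 <;> [skip; skip] <;>
      · have : (N : ℤ) ≥ 2 := by exact_mod_cast h2
        omega
  set b : ZMod N := (a : ZMod N) ^ K with hb
  have hbn : b ^ p ^ n = 1 := by
    have he : K * p ^ n = N - 1 := by omega
    rw [hb, ← pow_mul, he]
    exact ZMod.pow_card_sub_one_eq_one haz
  have hP : ∃ m, b ^ p ^ m = 1 := ⟨n, hbn⟩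
  classical
  set m := Nat.find hP with hm
  have hmspec : b ^ p ^ m = 1 := Nat.find_spec hP
  have hmn : m ≤ n := Nat.find_le hbn
  rcases Nat.eq_zero_or_pos m with h0 | hpos
  · left
    have := hmspec
    rw [h0, pow_zero, pow_one] at this
    exact this
  · right
    refine ⟨m - 1, by omega, ?_⟩
    have hx : (a : ZMod N) ^ (K * p ^ (m - 1)) = b ^ p ^ (m - 1) := by
      rw [hb, ← pow_mul]
    rw [hx]
    have hne : b ^ p ^ (m - 1) ≠ 1 := Nat.find_min hP (by omega)
    have hxp : (b ^ p ^ (m - 1)) ^ p = 1 := by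
      rw [← pow_mul, ← pow_succ, Nat.sub_add_cancel hpos]
      exact hmspec
    have hgeo := geom_sum_mul (b ^ p ^ (m - 1)) p
    rw [hxp, sub_self] at hgeo
    rcases mul_eq_zero.mp hgeo with h | h
    · exact h
    · exact absurd (sub_eq_zero.mp h) hne
end

section
/- Let N = K·p^n + 1 where p is prime and gcd(K,p) = 1. If there exists j with 1 ≤ j ≤ n such that Φ_p(2^(K·p^(j-1))) ≡ 0 (mod N) and p^(2j) > K·p^n, then N is prime. -/
theorem sufficient_primality_base_two (p K n N : ℕ) (hp : p.Prime) (hK : 0 < K)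
    (hn : 0 < n) (hKp : Nat.gcd K p = 1) (hN : N = K * p ^ n + 1)
    (h : ∃ j, 1 ≤ j ∧ j ≤ n ∧
      ∑ i ∈ Finset.range p, ((2 : ZMod N) ^ (K * p ^ (j - 1))) ^ i = 0 ∧
      K * p ^ n < p ^ (2 * j)) : Nat.Prime N := by
  obtain ⟨j, hj1, hjn, hsum, hsize⟩ := h
  by_contra hcomp
  have hp2 : 2 ≤ p := hp.two_le
  have hN2 : 2 ≤ N := by
    have : 1 ≤ K * p ^ n := Nat.one_le_iff_ne_zero.2 (by positivity)
    omega
  set q := N.minFac with hqdef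
  have hq : q.Prime := Nat.minFac_prime (by omega)
  have hqd : q ∣ N := Nat.minFac_dvd N
  have hqsq : q ^ 2 ≤ N := Nat.minFac_sq_le_self (by omega) hcomp
  haveI : Fact q.Prime := ⟨hq⟩
  -- push the sum hypothesis to ZMod q
  set m := K * p ^ (j - 1) with hm
  have hm0 : 0 < m := by positivity
  set x : ZMod q := (2 : ZMod q) ^ m with hx
  have hsumq : ∑ i ∈ Finset.range p, x ^ i = 0 := by
    have := congrArg (ZMod.castHom hqd (ZMod q)) hsum
    simpa [map_sum, map_pow, map_ofNat] using this
  -- x ^ p = 1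
  have hxp : x ^ p = 1 := by
    have := geom_sum_mul x p
    rw [hsumq, zero_mul] at this
    have : x ^ p - 1 = 0 := this.symm
    linear_combination this
  -- 2 ≠ 0 in ZMod q
  have h2 : (2 : ZMod q) ≠ 0 := by
    intro h20
    have hx0 : x = 0 := by rw [hx, h20, zero_pow hm0.ne']
    rw [hx0, zero_pow hp.pos.ne'] at hxp
    exact zero_ne_one hxp
  -- x ≠ 1
  have hx1 : x ≠ 1 := by
    intro hx1
    rw [hx1] at hsumq
    simp only [one_pow, Finset.sum_const, Finset.card_range, nsmul_eq_mul, mul_one] at hsumq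
    have hqp : q ∣ p := (ZMod.natCast_eq_zero_iff p q).1 hsumq
    have : q = p := (Nat.prime_dvd_prime_iff_eq hq hp).1 hqp
    have hpN : p ∣ N := this ▸ hqd
    have : p ∣ K * p ^ n := Dvd.dvd.mul_left (dvd_pow_self p hn.ne') K
    have : p ∣ 1 := (Nat.dvd_add_right this).1 (hN ▸ hpN)
    have := Nat.dvd_one.mp this
    omega
  -- order of 2
  set d := orderOf (2 : ZMod q) with hd
  have hdvd : d ∣ K * p ^ j := by
    rw [orderOf_dvd_iff_pow_eq_one]
    have : K * p ^ j = m * p := by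
      rw [hm, mul_assoc, ← pow_succ]
      congr 2
      omega
    rw [this, pow_mul, ← hx, hxp]
  have hndvd : ¬ d ∣ m := by
    intro hdm
    exact hx1 (orderOf_dvd_iff_pow_eq_one.1 hdm)
  have hd0 : d ≠ 0 := by
    intro h0
    rw [h0] at hdvd
    have : K * p ^ j = 0 := Nat.eq_zero_of_zero_dvd hdvd
    have : 0 < K * p ^ j := by positivity
    omega
  -- p^j ∣ d
  have hpjd : p ^ j ∣ d := by
    by_contra hnp
    apply hndvd
    have hv : d.factorization p ≤ j - 1 := by
      by_contra hv
      exact hnp ((Nat.Prime.pow_dvd_iff_le_factorization hp hd0).2 (by omega))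
    have hcompl : (d / p ^ d.factorization p) ∣ K := by
      have hcop : Nat.Coprime (d / p ^ d.factorization p) p :=
        (Nat.coprime_ordCompl hp hd0).symm
      refine (Nat.Coprime.dvd_of_dvd_mul_right (Nat.Coprime.pow_right j hcop)) ?_
      exact dvd_trans (Nat.ordCompl_dvd d p) hdvd
    have : d = p ^ d.factorization p * (d / p ^ d.factorization p) :=
      (Nat.ordProj_mul_ordCompl_eq_self d p).symm
    rw [hm, this, mul_comm K]
    exact Nat.mul_dvd_mul (pow_dvd_pow p hv) hcompl
  -- d ∣ q - 1
  have hdq : d ∣ q - 1 := ZMod.orderOf_dvd_card_sub_one h2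
  have hq1 : p ^ j ≤ q - 1 := Nat.le_of_dvd (by have := hq.two_le; omega) (hpjd.trans hdq)
  have hqge : p ^ j + 1 ≤ q := by have := hq.two_le; omega
  -- contradiction with size
  have h2j : p ^ (2 * j) = (p ^ j) ^ 2 := by rw [← pow_mul, mul_comm]
  have hpj1 : 1 ≤ p ^ j := Nat.one_le_pow _ _ hp.pos
  nlinarith [hqsq, hsize, hqge, hN]
end

section
/- Let N = K·p^n + 1 where p is prime and gcd(K,p) = 1, and let a be any integer. If there exists j with 1 ≤ j ≤ n such that Φ_p(a^(K·p^(j-1))) ≡ 0 (mod N) and p^(2j) > K·p^n, then N is prime. -/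
theorem sufficient_primality (p K n N : ℕ) (hp : p.Prime) (hK : 0 < K)
    (hn : 0 < n) (hKp : Nat.gcd K p = 1) (hN : N = K * p ^ n + 1) (a : ℤ)
    (h : ∃ j, 1 ≤ j ∧ j ≤ n ∧
      ∑ i ∈ Finset.range p, ((a : ZMod N) ^ (K * p ^ (j - 1))) ^ i = 0 ∧
      K * p ^ n < p ^ (2 * j)) : Nat.Prime N := by
  obtain ⟨j, hj1, hjn, hsum, hsize⟩ := h
  have hp2 := hp.two_le
  have hpn : 2 ≤ p ^ n := le_trans hp2 (Nat.le_self_pow (by omega) p)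
  have hN2 : 3 ≤ N := by
    have : 2 ≤ K * p ^ n := le_trans hpn (Nat.le_mul_of_pos_left _ hK)
    omega
  by_contra hNP
  set q := N.minFac with hq
  have hqN : q ∣ N := Nat.minFac_dvd N
  have hqprime : q.Prime := Nat.minFac_prime (by omega : N ≠ 1)
  haveI : Fact q.Prime := ⟨hqprime⟩
  haveI : NeZero N := ⟨by omega⟩
  have hqnep : q ≠ p := by
    intro hqp
    have hpN : p ∣ N := hqp ▸ hqN
    have : p ∣ K * p ^ n := Dvd.dvd.mul_left (dvd_pow_self p (by omega)) K
    have h1 : p ∣ 1 := (Nat.dvd_add_right this).mp (hN ▸ hpN)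
    have := Nat.dvd_one.mp h1
    omega
  set c : ZMod q := (a : ZMod q) ^ K with hc
  set b : ZMod q := c ^ (p ^ (j - 1)) with hbdef
  have hb : ∑ i ∈ Finset.range p, b ^ i = 0 := by
    have := congrArg (ZMod.castHom hqN (ZMod q)) hsum
    simpa [map_sum, map_pow, hbdef, hc, pow_mul] using this
  have hbp : b ^ p = 1 := by
    have hg := geom_sum_mul b p
    rw [hb, zero_mul] at hg
    have : b ^ p - 1 = 0 := hg.symm
    linear_combination this
  have hbne1 : b ≠ 1 := by
    intro h1
    rw [h1] at hb
    simp only [one_pow, Finset.sum_const, Finset.card_range, nsmul_eq_mul, mul_one] at hb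
    have : q ∣ p := (ZMod.natCast_eq_zero_iff p q).mp hb
    exact hqnep ((Nat.prime_dvd_prime_iff_eq hqprime hp).mp this)
  have hc1 : c ^ (p ^ j) = 1 := by
    have : p ^ j = p ^ (j - 1) * p := by
      rw [← pow_succ]; congr 1; omega
    rw [this, pow_mul, ← hbdef, hbp]
  have hcord : orderOf c ∣ p ^ j := orderOf_dvd_of_pow_eq_one hc1
  obtain ⟨e, hej, hce⟩ := (Nat.dvd_prime_pow hp).mp hcord
  have hejeq : e = j := by
    by_contra hne
    have h1 : orderOf c ∣ p ^ (j - 1) := hce ▸ pow_dvd_pow p (by omega)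
    exact hbne1 (orderOf_dvd_iff_pow_eq_one.mp h1)
  have hcne0 : c ≠ 0 := by
    intro h0
    rw [h0, zero_pow (by positivity : p ^ j ≠ 0)] at hc1
    exact zero_ne_one hc1
  have hdvd : orderOf c ∣ q - 1 :=
    orderOf_dvd_of_pow_eq_one (ZMod.pow_card_sub_one_eq_one hcne0)
  rw [hce, hejeq] at hdvd
  have hq2 : 2 ≤ q := hqprime.two_le
  have hple : p ^ j ≤ q - 1 := Nat.le_of_dvd (by omega) hdvd
  have hsq : q ^ 2 ≤ N := Nat.minFac_sq_le_self (by omega) hNP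
  have h2j : p ^ (2 * j) = p ^ j * p ^ j := by rw [two_mul, pow_add]
  have hpj1 : 1 ≤ p ^ j := Nat.one_le_pow _ _ (by omega)
  have hple' : p ^ j + 1 ≤ q := by omega
  rw [pow_two] at hsq
  nlinarith [Nat.mul_le_mul hple' hple', hsq, hsize, hN2, hpj1]
end

section
/- Let N = K·2^n + 1 where K is odd. Define S_0 = 2^K and S_i = S_{i-1}^2 for i ≥ 1 (so S_i = 2^(K·2^i)). If there exists j with j ≤ n and 2^(2j) > K·2^n such that S_j ≡ -1 (mod N), then N is prime. -/
theorem proth_sequence (K n N : ℕ) (hK : Odd K) (hK0 : 0 < K) (hn : 1 ≤ n)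
    (hN : N = K * 2 ^ n + 1)
    (h : ∃ j, j ≤ n ∧ K * 2 ^ n < 2 ^ (2 * j) ∧ (2 : ZMod N) ^ (K * 2 ^ j) = -1) :
    Nat.Prime N := by
  obtain ⟨j, hjn, hsize, hpow⟩ := h
  have h2n : 2 ≤ 2 ^ n := by
    calc 2 = 2 ^ 1 := rfl
    _ ≤ 2 ^ n := Nat.pow_le_pow_right (by norm_num) hn
  have hKN : 2 ≤ K * 2 ^ n := le_trans h2n (Nat.le_mul_of_pos_left _ hK0)
  have hN3 : 3 ≤ N := by omega
  by_contra hNp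
  set p := N.minFac with hp
  have hpprime : p.Prime := Nat.minFac_prime (by omega)
  have hpdvd : p ∣ N := Nat.minFac_dvd N
  have hpsq : p * p ≤ N := by
    have := Nat.minFac_sq_le_self (by omega : 0 < N) hNp
    simpa [pow_two] using this
  -- p is odd
  have h2dN : ¬ 2 ∣ N := by
    have h2d : 2 ∣ K * 2 ^ n := Dvd.dvd.mul_left (dvd_pow_self 2 (by omega)) K
    omega
  have hNodd : Odd N := Nat.odd_iff.mpr (by omega)
  have hpodd : p ≠ 2 := by
    rintro h2
    rw [h2] at hpdvd
    exact h2dN hpdvd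
  have hp3 : 3 ≤ p := by
    have := hpprime.two_le
    omega
  haveI : Fact p.Prime := ⟨hpprime⟩
  -- cast the hypothesis to ZMod p
  have hpowp : (2 : ZMod p) ^ (K * 2 ^ j) = -1 := by
    have := congrArg (ZMod.castHom hpdvd (ZMod p)) hpow
    simpa [map_pow, map_neg, map_one, map_ofNat] using this
  have hneg : (-1 : ZMod p) ≠ 1 := by
    intro hne
    have h2 : ((2 : ℕ) : ZMod p) = 0 := by
      push_cast
      linear_combination -hne
    have hdd := (ZMod.natCast_eq_zero_iff 2 p).mp h2
    have := Nat.le_of_dvd (by norm_num) hdd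
    omega
  set d := orderOf (2 : ZMod p) with hd
  have hd1 : d ∣ K * 2 ^ (j + 1) := by
    apply orderOf_dvd_of_pow_eq_one
    have he : K * 2 ^ (j + 1) = (K * 2 ^ j) * 2 := by ring
    rw [he, pow_mul, hpowp]
    ring
  have hd2 : ¬ d ∣ K * 2 ^ j := by
    intro hdd
    have := (orderOf_dvd_iff_pow_eq_one).mp hdd
    rw [hpowp] at this
    exact hneg this
  have hKne : K ≠ 0 := hK0.ne'
  have hdne : d ≠ 0 := by
    intro h0
    rw [h0] at hd1
    have := Nat.eq_zero_of_zero_dvd hd1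
    simp [hKne] at this
  -- 2-adic valuation argument: 2^(j+1) ∣ d
  have hfK : (K.factorization) 2 = 0 := by
    rw [Nat.factorization_eq_zero_iff]
    right; left
    exact Nat.two_dvd_ne_zero.mpr (Nat.odd_iff.mp hK)
  have hfmul : ∀ m : ℕ, (K * 2 ^ m).factorization = K.factorization + m • (Nat.factorization 2) := by
    intro m
    rw [Nat.factorization_mul hKne (by positivity), Nat.factorization_pow]
  have hf2 : (Nat.factorization 2) = Finsupp.single 2 1 := Nat.Prime.factorization Nat.prime_two
  have hdvd21 : 2 ^ (j + 1) ∣ d := by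
    rw [Nat.Prime.pow_dvd_iff_le_factorization Nat.prime_two hdne]
    by_contra hlt
    push_neg at hlt
    apply hd2
    rw [← Nat.factorization_le_iff_dvd hdne (by positivity), Finsupp.le_def]
    have hle := Finsupp.le_def.mp ((Nat.factorization_le_iff_dvd hdne (by positivity)).mpr hd1)
    intro q
    rcases eq_or_ne q 2 with rfl | hq
    · have : d.factorization 2 ≤ j := by omega
      calc d.factorization 2 ≤ j := this
      _ ≤ (K * 2 ^ j).factorization 2 := by
          rw [hfmul j, hf2]; simp
    · have h1 := hle q
      rw [hfmul (j+1), hf2] at h1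
      rw [hfmul j, hf2]
      simpa [Finsupp.single_apply, Ne.symm hq] using h1
  -- d divides p - 1
  have h2ne : (2 : ZMod p) ≠ 0 := by
    intro h2
    have h2' : ((2 : ℕ) : ZMod p) = 0 := by push_cast; exact h2
    have hdd := (ZMod.natCast_eq_zero_iff 2 p).mp h2'
    have := Nat.le_of_dvd (by norm_num) hdd
    omega
  have hdp : d ∣ p - 1 :=
    orderOf_dvd_of_pow_eq_one (ZMod.pow_card_sub_one_eq_one h2ne)
  have h2p : 2 ^ (j + 1) ∣ p - 1 := dvd_trans hdvd21 hdp
  have hple : 2 ^ (j + 1) ≤ p - 1 := Nat.le_of_dvd (by omega) h2p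
  -- size contradiction
  have hj2 : 2 ^ j * 2 ^ j = 2 ^ (2 * j) := by
    rw [← pow_add]; ring_nf
  have hjp : 2 ^ j < p := by
    have : 2 ^ j < 2 ^ (j + 1) := Nat.pow_lt_pow_right (by norm_num) (by omega)
    omega
  have : N < p * p := by
    calc N = K * 2 ^ n + 1 := hN
    _ ≤ 2 ^ (2 * j) := hsize
    _ = 2 ^ j * 2 ^ j := hj2.symm
    _ < p * p := Nat.mul_lt_mul_of_lt_of_lt hjp hjp
  omega
end

section
/- Let N = K·p^n + 1 where p is prime, gcd(K,p)=1, K < p^n, and set J = ⌊(log_p K + n)/2⌋. If a is an integer with a^(K·p^J) ≢ 1 (mod N), a^(K·p^n) ≡ 1 (mod N), and Φ_p(a^(K·p^(m-1))) ≡ 0 (mod N) where m is the least index with a^(K·p^m) ≡ 1 (mod N), then N is prime. -/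
theorem algorithm_two_correct (p K n N J : ℕ) (hp : p.Prime) (hK : 0 < K)
    (hn : 0 < n) (hKp : Nat.gcd K p = 1) (hKlt : K < p ^ n) (hN : N = K * p ^ n + 1)
    (hJ1 : p ^ (2 * J) ≤ K * p ^ n) (hJ2 : K * p ^ n < p ^ (2 * (J + 1)))
    (a : ℤ) (ha : IsCoprime a (N : ℤ))
    (h1 : (a : ZMod N) ^ (K * p ^ J) ≠ 1)
    (h2 : (a : ZMod N) ^ (K * p ^ n) = 1)
    (h3 : ∀ m, ((a : ZMod N) ^ (K * p ^ m) = 1 ∧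
        ∀ i < m, (a : ZMod N) ^ (K * p ^ i) ≠ 1) →
      ∑ i ∈ Finset.range p, ((a : ZMod N) ^ (K * p ^ (m - 1))) ^ i = 0) :
    Nat.Prime N := by
  have hp2 : 2 ≤ p := hp.two_le
  have hpn1 : 1 ≤ p ^ n := Nat.one_le_pow _ _ hp.pos
  have hN1 : 1 < N := by
    have : 1 ≤ K * p ^ n := Nat.one_le_iff_ne_zero.mpr (by positivity)
    omega
  -- p does not divide N
  have hpN : ¬ p ∣ N := by
    intro hdvd
    have h1 : p ∣ K * p ^ n := Dvd.dvd.mul_left (dvd_pow_self p hn.ne') K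
    have : p ∣ 1 := (Nat.dvd_add_right h1).mp (hN ▸ hdvd)
    have := Nat.le_of_dvd one_pos this
    omega
  -- minimal m with a^(K p^m) = 1
  have hex : ∃ m, (a : ZMod N) ^ (K * p ^ m) = 1 := ⟨n, h2⟩
  set m := Nat.find hex with hm
  have hmspec : (a : ZMod N) ^ (K * p ^ m) = 1 := Nat.find_spec hex
  have hmmin : ∀ i < m, (a : ZMod N) ^ (K * p ^ i) ≠ 1 := fun i hi => Nat.find_min hex hi
  have hJm : J < m := by
    by_contra h
    push_neg at h
    apply h1
    have he : K * p ^ J = (K * p ^ m) * p ^ (J - m) := by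
      rw [mul_assoc, ← pow_add]
      congr 2
      omega
    rw [he, pow_mul, hmspec, one_pow]
  have hm1 : 1 ≤ m := by omega
  have hsum := h3 m ⟨hmspec, hmmin⟩
  -- take any prime divisor q of N
  have key : ∀ q : ℕ, q.Prime → q ∣ N → p ^ (J + 1) + 1 ≤ q := by
    intro q hq hqN
    haveI : Fact q.Prime := ⟨hq⟩
    have hq1 : 1 < q := hq.one_lt
    set f : ZMod N →+* ZMod q := ZMod.castHom hqN (ZMod q) with hf
    set a' : ZMod q := (a : ZMod q) with ha'
    have hfa : f ((a : ℤ) : ZMod N) = a' := map_intCast f a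
    -- a' ≠ 0
    have ha0 : a' ≠ 0 := by
      obtain ⟨u, v, huv⟩ := ha
      intro h0
      have h := congrArg (fun z : ℤ => (z : ZMod q)) huv
      push_cast at h
      have hNq : ((N : ℕ) : ZMod q) = 0 := (ZMod.natCast_eq_zero_iff N q).mpr hqN
      rw [hNq, ← ha', h0] at h
      simp at h
    set b : ZMod q := a' ^ (K * p ^ (m - 1)) with hb
    -- geometric sum is zero mod q
    have hsq : ∑ i ∈ Finset.range p, b ^ i = 0 := by
      have := congrArg f hsum
      rw [map_sum, map_zero] at this
      simpa [map_pow, hfa] using this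
    -- b ≠ 1
    have hb1 : b ≠ 1 := by
      intro hb1
      rw [hb1] at hsq
      simp at hsq
      have : q ∣ p := (ZMod.natCast_eq_zero_iff p q).mp (by exact_mod_cast hsq)
      have : q = p := (Nat.prime_dvd_prime_iff_eq hq hp).mp this
      exact hpN (this ▸ hqN)
    -- b ^ p = 1
    have hbp : b ^ p = 1 := by
      have := geom_sum_mul b p
      rw [hsq, zero_mul] at this
      have := sub_eq_zero.mp this.symm
      linear_combination this
    -- orderOf b = p
    have hob : orderOf b = p := by
      have hdvd : orderOf b ∣ p := orderOf_dvd_of_pow_eq_one hbp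
      rcases (Nat.Prime.eq_one_or_self_of_dvd hp _ hdvd) with h | h
      · exact absurd (orderOf_eq_one_iff.mp h) hb1
      · exact h
    -- order of a'
    set d : ℕ := orderOf a' with hd
    have hdq : d ∣ q - 1 :=
      orderOf_dvd_of_pow_eq_one (ZMod.pow_card_sub_one_eq_one ha0)
    have hq1' : q - 1 ≠ 0 := by omega
    have hd0 : d ≠ 0 := fun h => hq1' (Nat.eq_zero_of_zero_dvd (h ▸ hdq))
    have hk0 : K * p ^ (m - 1) ≠ 0 := by positivity
    set g : ℕ := Nat.gcd d (K * p ^ (m - 1)) with hg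
    have hgd : g ∣ d := Nat.gcd_dvd_left _ _
    have hg0 : g ≠ 0 := fun h => hd0 (Nat.eq_zero_of_gcd_eq_zero_left (hg ▸ h))
    have hop : d / g = p := (orderOf_pow' a' hk0).symm.trans hob
    have hdpg : d = p * g := by
      rw [← hop]
      exact (Nat.div_mul_cancel hgd).symm
    -- factorization computations
    have hpK : ¬ p ∣ K := by
      intro h
      have hg1 : p ∣ Nat.gcd K p := Nat.dvd_gcd h dvd_rfl
      rw [hKp] at hg1
      have := Nat.le_of_dvd one_pos hg1
      omega
    have hfactK : K.factorization p = 0 := Nat.factorization_eq_zero_of_not_dvd hpK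
    have hfactKp : (K * p ^ (m - 1)).factorization p = m - 1 := by
      rw [Nat.factorization_mul hK.ne' (by positivity), Nat.Prime.factorization_pow hp]
      simp [hfactK]
    have hfactg : g.factorization p = min (d.factorization p) (m - 1) := by
      rw [hg, Nat.factorization_gcd hd0 hk0]
      simp [hfactKp, Finsupp.inf_apply]
    have hfactd : d.factorization p = 1 + g.factorization p := by
      rw [hdpg, Nat.factorization_mul hp.pos.ne' hg0]
      simp [hp.factorization]
    have hgm : g.factorization p = m - 1 := by omega
    have hdm : d.factorization p = m := by omega
    have hpmd : p ^ m ∣ d :=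
      (Nat.Prime.pow_dvd_iff_le_factorization hp hd0).mpr (le_of_eq hdm.symm)
    have hpJd : p ^ (J + 1) ∣ q - 1 :=
      dvd_trans (dvd_trans (pow_dvd_pow p hJm) hpmd) hdq
    have := Nat.le_of_dvd (by omega) hpJd
    omega
  -- now conclude
  by_contra hcomp
  have hq := Nat.minFac_prime (by omega : N ≠ 1)
  have hq2 := key _ hq (Nat.minFac_dvd N)
  have hsq := Nat.minFac_sq_le_self (by omega) hcomp
  have hP1 : 2 ≤ p ^ (J + 1) := by
    calc 2 ≤ p := hp2
    _ = p ^ 1 := (pow_one p).symm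
    _ ≤ p ^ (J + 1) := Nat.pow_le_pow_right hp.pos (by omega)
  have hPP : p ^ (2 * (J + 1)) = p ^ (J + 1) * p ^ (J + 1) := by
    rw [← pow_add]; ring_nf
  nlinarith [hsq, hq2, hJ2, hN1, sq_nonneg (N.minFac)]
end

section
/- Let p be a prime and q a prime divisor of an integer N with Φ_p(X^(p^(n-1))) ≡ 0 (mod N) for some integer X and n ≥ 1. Then q ≡ 1 (mod p^n); in particular every prime divisor of N is congruent to 1 modulo p^n. -/
theorem prime_divisors_congruent (p n N : ℕ) (hp : p.Prime) (hn : 1 ≤ n)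
    (hN : 1 < N) (hNp : Nat.gcd N p = 1) (X : ℤ)
    (h : ∑ i ∈ Finset.range p, ((X : ZMod N) ^ (p ^ (n - 1))) ^ i = 0)
    (q : ℕ) (hq : q.Prime) (hqN : q ∣ N) : q ≡ 1 [MOD p ^ n] := by
  haveI : Fact q.Prime := ⟨hq⟩
  set x : ZMod q := (X : ZMod q) with hxdef
  -- map the hypothesis to ZMod q
  have h' : ∑ i ∈ Finset.range p, (x ^ (p ^ (n - 1))) ^ i = 0 := by
    have := congrArg (ZMod.castHom hqN (ZMod q)) h
    simpa [map_sum, map_pow] using this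
  have hpn : p ^ (n - 1) * p = p ^ n := by
    rw [← pow_succ, Nat.sub_add_cancel hn]
  -- x ^ p ^ n = 1
  have hx1 : x ^ p ^ n = 1 := by
    have hg := geom_sum_mul (x ^ (p ^ (n - 1))) p
    rw [h', zero_mul, ← pow_mul, hpn] at hg
    exact sub_eq_zero.mp hg.symm
  have hq1 : (1 : ZMod q) ≠ 0 := one_ne_zero
  have hx0 : x ≠ 0 := by
    intro h0
    rw [h0, zero_pow (pow_ne_zero n hp.ne_zero)] at hx1
    exact hq1 hx1.symm
  -- order of x divides p ^ n
  have hord : orderOf x ∣ p ^ n := orderOf_dvd_of_pow_eq_one hx1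
  obtain ⟨k, hk, hko⟩ := (Nat.dvd_prime_pow hp).mp hord
  -- order is exactly p ^ n
  have hkn : k = n := by
    by_contra hne
    have hk' : k ≤ n - 1 := by omega
    have hdvd : orderOf x ∣ p ^ (n - 1) := hko ▸ pow_dvd_pow p hk'
    have hy1 : x ^ (p ^ (n - 1)) = 1 := orderOf_dvd_iff_pow_eq_one.mp hdvd
    rw [hy1] at h'
    simp only [one_pow, Finset.sum_const, Finset.card_range, nsmul_eq_mul, mul_one] at h'
    have hqp : q ∣ p := (ZMod.natCast_eq_zero_iff p q).mp h'
    have hqp' : q = p := (Nat.prime_dvd_prime_iff_eq hq hp).mp hqp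
    have : p ∣ Nat.gcd N p := Nat.dvd_gcd (hqp' ▸ hqN) dvd_rfl
    rw [hNp] at this
    exact hp.one_lt.ne' (Nat.eq_one_of_dvd_one this)
  have horde : orderOf x = p ^ n := by rw [hko, hkn]
  have hdvd : p ^ n ∣ q - 1 := horde ▸ ZMod.orderOf_dvd_card_sub_one hx0
  have := (Nat.modEq_iff_dvd' hq.one_lt.le).mpr hdvd
  exact this.symm
end
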